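/- Let p be an odd prime and q ∈ ℚ_p with |1 − q|_p < 1. For every continuous function f : ℤ_p → ℚ_p, the limit I_{−q}(f) exists in ℚ_p and satisfies q·I_{−q}(f₁) + I_{−q}(f) = [2]_q·f(0), where f₁(x) = f(x+1). -/

import Mathlib

open Filter Finset

variable {p : ℕ} [hp : Fact (Nat.Prime p)]


lemma my_norm_le_inv {x : ℚ_[p]} (h : ‖x‖ < 1) : ‖x‖ ≤ (p : ℝ)⁻¹ := by
  have := (Padic.norm_le_pow_iff_norm_lt_pow_add_one x (-1)).mpr (by simpa using h)
  simpa using this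

lemma my_norm_sum_le {ι : Type*} {s : Finset ι} {g : ι → ℚ_[p]} {C : ℝ} (hC : 0 ≤ C)
    (h : ∀ i ∈ s, ‖g i‖ ≤ C) : ‖∑ i ∈ s, g i‖ ≤ C :=
  IsUltrametricDist.norm_sum_le_of_forall_le_of_nonneg hC h

lemma my_key {s : ℚ_[p]} (hs : ‖s‖ ≤ (p : ℝ)⁻¹) : ‖(1 + s) ^ p - 1‖ ≤ (p : ℝ)⁻¹ * ‖s‖ := by
  have hp1 : (1 : ℝ) < p := by exact_mod_cast hp.out.one_lt
  have hpinv : (p : ℝ)⁻¹ ≤ 1 := by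
    rw [inv_le_one_iff₀]; right; linarith
  have hs1 : ‖s‖ ≤ 1 := hs.trans hpinv
  have hexp : (1 + s) ^ p - 1 = ∑ k ∈ range p, (p.choose (k + 1) : ℚ_[p]) * s ^ (k + 1) := by
    rw [add_comm, add_pow]
    rw [Finset.sum_range_succ']
    simp [mul_comm]
  rw [hexp]
  apply my_norm_sum_le (by positivity)
  intro k hk
  rw [Finset.mem_range] at hk
  rw [norm_mul, norm_pow]
  rcases eq_or_lt_of_le (Nat.succ_le_of_lt hk) with he | hlt
  · -- k + 1 = p
    have : (p.choose (k+1)) = 1 := by rw [← he]; exact Nat.choose_self _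
    rw [this]
    simp only [Nat.cast_one, norm_one, one_mul]
    calc ‖s‖ ^ (k+1) = ‖s‖ ^ k * ‖s‖ := by ring
      _ ≤ (p:ℝ)⁻¹ ^ k * ‖s‖ := by
          apply mul_le_mul_of_nonneg_right (pow_le_pow_left₀ (norm_nonneg _) hs k) (norm_nonneg _)
      _ ≤ (p:ℝ)⁻¹ * ‖s‖ := by
          apply mul_le_mul_of_nonneg_right _ (norm_nonneg _)
          cases k with
          | zero => exact absurd he (by have := hp.out.two_le; omega)
          | succ m => calc (p:ℝ)⁻¹ ^ (m+1) ≤ (p:ℝ)⁻¹ ^ 1 :=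
                        pow_le_pow_of_le_one (by positivity) hpinv (by omega)
                      _ = (p:ℝ)⁻¹ := pow_one _
  · -- k + 1 < p
    have hdvd : p ∣ p.choose (k+1) := hp.out.dvd_choose_self (Nat.succ_ne_zero k) hlt
    obtain ⟨m, hm⟩ := hdvd
    have hnorm : ‖(p.choose (k+1) : ℚ_[p])‖ ≤ (p:ℝ)⁻¹ := by
      rw [hm]
      push_cast
      rw [norm_mul, Padic.norm_p]
      calc (p:ℝ)⁻¹ * ‖((m:ℤ) : ℚ_[p])‖ ≤ (p:ℝ)⁻¹ * 1 := by
            apply mul_le_mul_of_nonneg_left (Padic.norm_int_le_one m) (by positivity)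
        _ = (p:ℝ)⁻¹ := mul_one _
    calc ‖(p.choose (k+1) : ℚ_[p])‖ * ‖s‖ ^ (k+1)
        ≤ (p:ℝ)⁻¹ * ‖s‖ ^ (k+1) := by
          apply mul_le_mul_of_nonneg_right hnorm (by positivity)
      _ ≤ (p:ℝ)⁻¹ * ‖s‖ := by
          apply mul_le_mul_of_nonneg_left _ (by positivity)
          calc ‖s‖ ^ (k+1) = ‖s‖ ^ k * ‖s‖ := by ring
            _ ≤ 1 * ‖s‖ := mul_le_mul_of_nonneg_right (pow_le_one₀ (norm_nonneg _) hs1) (norm_nonneg _)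
            _ = ‖s‖ := one_mul _


lemma my_iter {q : ℚ_[p]} (hq : ‖1 - q‖ < 1) (N : ℕ) :
    ‖q ^ (p ^ N) - 1‖ ≤ (p : ℝ)⁻¹ ^ (N + 1) := by
  have h0 : ‖q - 1‖ ≤ (p:ℝ)⁻¹ := my_norm_le_inv (by rwa [norm_sub_rev])
  have hpinv : (p : ℝ)⁻¹ ≤ 1 := by
    rw [inv_le_one_iff₀]; right; exact_mod_cast hp.out.one_le
  induction N with
  | zero => simpa using h0
  | succ N ih =>
    have hle : ‖q ^ (p ^ N) - 1‖ ≤ (p:ℝ)⁻¹ :=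
      ih.trans (by
        calc (p:ℝ)⁻¹ ^ (N+1) ≤ (p:ℝ)⁻¹ ^ 1 :=
              pow_le_pow_of_le_one (by positivity) hpinv (by omega)
          _ = (p:ℝ)⁻¹ := pow_one _)
    have : q ^ (p ^ (N+1)) = (1 + (q ^ (p ^ N) - 1)) ^ p := by
      rw [add_sub_cancel, pow_succ, pow_mul]
    rw [this]
    calc ‖(1 + (q ^ (p ^ N) - 1)) ^ p - 1‖ ≤ (p:ℝ)⁻¹ * ‖q ^ (p ^ N) - 1‖ := my_key hle
      _ ≤ (p:ℝ)⁻¹ * (p:ℝ)⁻¹ ^ (N+1) := by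
          apply mul_le_mul_of_nonneg_left ih (by positivity)
      _ = (p:ℝ)⁻¹ ^ (N+1+1) := by ring

lemma my_tendsto_qpow {q : ℚ_[p]} (hq : ‖1 - q‖ < 1) :
    Tendsto (fun N : ℕ => q ^ (p ^ N)) atTop (nhds 1) := by
  have hp1 : (1:ℝ) < p := by exact_mod_cast hp.out.one_lt
  have h : Tendsto (fun N : ℕ => q ^ (p ^ N) - 1) atTop (nhds 0) := by
    apply squeeze_zero_norm (fun N => my_iter hq N)
    have := tendsto_pow_atTop_nhds_zero_of_lt_one (le_of_lt (by positivity : (0:ℝ) < (p:ℝ)⁻¹))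
      (by rw [inv_lt_one_iff₀]; right; exact hp1)
    exact this.comp (tendsto_add_atTop_nat 1)
  have := h.add_const 1
  simpa using this

lemma my_norm_one_add {z : ℚ_[p]} (hpo : Odd p) (hz : ‖z - 1‖ < 1) : ‖1 + z‖ = 1 := by
  have h2 : ‖(2 : ℚ_[p])‖ = 1 := by
    have hle : ‖(2 : ℚ_[p])‖ ≤ 1 := by exact_mod_cast Padic.norm_int_le_one (2 : ℤ)
    rcases lt_or_eq_of_le hle with h | h
    · exfalso
      have : (p : ℤ) ∣ 2 := (Padic.norm_intCast_lt_one_iff (k := 2)).mp (by exact_mod_cast h)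
      have hpd : p ∣ 2 := by exact_mod_cast this
      have := Nat.le_of_dvd (by norm_num) hpd
      have h2 := hp.out.two_le
      interval_cases p
      · have := Nat.odd_iff.mp hpo; omega
    · exact h
  have : (1 : ℚ_[p]) + z = 2 + (z - 1) := by ring
  rw [this, Padic.add_eq_max_of_ne (by rw [h2]; exact fun he => absurd (he ▸ hz) (lt_irrefl _)),
    h2, max_eq_left (le_of_lt (h2 ▸ hz))]

lemma my_norm_q {q : ℚ_[p]} (hq : ‖1 - q‖ < 1) : ‖q‖ = 1 := by
  have : q = 1 + -(1 - q) := by ring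
  rw [this, Padic.add_eq_max_of_ne (by rw [norm_one, norm_neg]; exact fun he => absurd (he ▸ hq) (by simp [he.symm ▸ hq]))]
  · rw [norm_one, norm_neg, max_eq_left (le_of_lt hq)]

lemma my_sum_range_mul {M : Type*} [AddCommMonoid M] (g : ℕ → M) (m n : ℕ) :
    ∑ x ∈ range (m * n), g x = ∑ b ∈ range m, ∑ a ∈ range n, g (b * n + a) := by
  induction m with
  | zero => simp
  | succ m ih =>
    rw [Nat.succ_mul, Finset.sum_range_add, ih, Finset.sum_range_succ]

lemma my_pow_sub_one_le {x : ℚ_[p]} (hx : ‖x‖ ≤ 1) (b : ℕ) : ‖x ^ b - 1‖ ≤ ‖x - 1‖ := by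
  rw [← geom_sum_mul, norm_mul]
  calc ‖∑ i ∈ range b, x ^ i‖ * ‖x - 1‖ ≤ 1 * ‖x - 1‖ := by
        apply mul_le_mul_of_nonneg_right _ (norm_nonneg _)
        apply IsUltrametricDist.norm_sum_le_of_forall_le_of_nonneg zero_le_one
        intro i _
        rw [norm_pow]; exact pow_le_one₀ (norm_nonneg _) hx
    _ = ‖x - 1‖ := one_mul _


lemma my_conv (hpo : Odd p) (q : ℚ_[p]) (hq : ‖1 - q‖ < 1)
    (f : ℤ_[p] → ℚ_[p]) (hf : Continuous f) :
    ∃ I : ℚ_[p], Tendsto (fun N : ℕ =>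
        ((1 + q) / (1 - (-q) ^ (p ^ N))) * ∑ x ∈ range (p ^ N), f (x : ℤ_[p]) * (-q) ^ x)
      atTop (nhds I) := by
  set S : ℕ → ℚ_[p] := fun N => ∑ x ∈ range (p ^ N), f (x : ℤ_[p]) * (-q) ^ x with hSdef
  set c : ℕ → ℚ_[p] := fun N => (1 + q) / (1 + q ^ (p ^ N)) with hcdef
  have hfun : (fun N : ℕ => ((1 + q) / (1 - (-q) ^ (p ^ N))) * S N) = fun N => c N * S N := by
    funext N
    rw [hcdef, Odd.neg_pow hpo.pow, sub_neg_eq_add]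
  rw [hfun]
  -- basic facts
  have hp1 : (1 : ℝ) < p := by exact_mod_cast hp.out.one_lt
  have hpinv0 : (0:ℝ) < (p:ℝ)⁻¹ := by positivity
  have hpinv1 : (p : ℝ)⁻¹ < 1 := by rw [inv_lt_one_iff₀]; right; exact hp1
  have hq1 : ‖q‖ = 1 := my_norm_q hq
  have hnegq : ‖-q‖ = 1 := by rw [norm_neg, hq1]
  have hsmall : ∀ N, ‖q ^ (p ^ N) - 1‖ < 1 := fun N =>
    lt_of_le_of_lt (my_iter hq N)
      (pow_lt_one₀ (le_of_lt hpinv0) hpinv1 (Nat.succ_ne_zero N))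
  have hden : ∀ N, ‖1 + q ^ (p ^ N)‖ = 1 := fun N => my_norm_one_add hpo (hsmall N)
  have hnum : ‖1 + q‖ = 1 := my_norm_one_add hpo (by rwa [norm_sub_rev] at hq)
  have hc1 : ∀ N, ‖c N‖ = 1 := by
    intro N; rw [hcdef]; simp only [norm_div, hden N, hnum, div_one]
  have h2norm : ‖(1 + 1 : ℚ_[p])‖ = 1 := my_norm_one_add hpo (by simp)
  have h2ne : (1 + 1 : ℚ_[p]) ≠ 0 := by
    intro h; rw [h] at h2norm; simp at h2norm
  have htc : Tendsto c atTop (nhds ((1 + q) / (1 + 1))) := by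
    exact tendsto_const_nhds.div (tendsto_const_nhds.add (my_tendsto_qpow hq)) h2ne
  -- bound for f
  obtain ⟨M, hM⟩ := isCompact_univ.exists_bound_of_continuousOn hf.continuousOn
  set M' : ℝ := max M 1 with hM'def
  have hM' : ∀ x : ℤ_[p], ‖f x‖ ≤ M' := fun x => (hM x trivial).trans (le_max_left _ _)
  have hM'0 : (0:ℝ) < M' := lt_of_lt_of_le one_pos (le_max_right _ _)
  have hSle : ∀ N, ‖S N‖ ≤ M' := by
    intro N
    apply my_norm_sum_le (le_of_lt hM'0)
    intro x _
    rw [norm_mul, norm_pow, hnegq, one_pow, mul_one]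
    exact hM' _
  -- the main estimate : S (N+1) - S N → 0
  have hDS : Tendsto (fun N => S (N + 1) - S N) atTop (nhds 0) := by
    rw [NormedAddCommGroup.tendsto_nhds_zero]
    intro ε hε
    have huc := CompactSpace.uniformContinuous_of_continuous hf
    rw [Metric.uniformContinuous_iff] at huc
    obtain ⟨δ, hδ0, hδ⟩ := huc (ε / 2) (by positivity)
    have hev1 : ∀ᶠ N in atTop, ‖q ^ (p ^ N) - 1‖ * M' < ε / 2 := by
      have h0 : Tendsto (fun N : ℕ => ‖q ^ (p ^ N) - 1‖ * M') atTop (nhds 0) := by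
        have := (((my_tendsto_qpow hq).sub_const 1).norm).mul_const M'
        simpa using this
      exact h0.eventually_lt_const (by positivity)
    have hev2 : ∀ᶠ N in atTop, ((p:ℝ)⁻¹) ^ N < δ := by
      exact (tendsto_pow_atTop_nhds_zero_of_lt_one (le_of_lt hpinv0) hpinv1).eventually_lt_const hδ0
    filter_upwards [hev1, hev2] with N h1 h2
    have hband : ‖S (N + 1) - S N‖ ≤ ε / 2 := by
      have hsplit : S (N + 1) - S N = ∑ a ∈ range (p ^ N),
          ((∑ b ∈ range p, f ((b * p ^ N + a : ℕ) : ℤ_[p]) * (-q) ^ (b * p ^ N + a))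
            - f (a : ℤ_[p]) * (-q) ^ a) := by
        have hS1 : S (N + 1) = ∑ b ∈ range p, ∑ a ∈ range (p ^ N),
            f ((b * p ^ N + a : ℕ) : ℤ_[p]) * (-q) ^ (b * p ^ N + a) := by
          show (∑ x ∈ range (p ^ (N + 1)), f (x : ℤ_[p]) * (-q) ^ x) = _
          rw [pow_succ']
          exact my_sum_range_mul _ p (p ^ N)
        rw [hS1, Finset.sum_comm, hSdef, ← Finset.sum_sub_distrib]
      rw [hsplit]
      apply my_norm_sum_le (by positivity)
      intro a _
      have hinner : (∑ b ∈ range p, f ((b * p ^ N + a : ℕ) : ℤ_[p]) * (-q) ^ (b * p ^ N + a))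
            - f (a : ℤ_[p]) * (-q) ^ a
          = (∑ b ∈ range p,
              (-1 : ℚ_[p]) ^ b * ((q ^ (p ^ N)) ^ b * f ((b * p ^ N + a : ℕ) : ℤ_[p]) - f (a : ℤ_[p])))
            * (-q) ^ a := by
        rw [Finset.sum_mul]
        have hone : (f (a : ℤ_[p]) * (-q) ^ a : ℚ_[p])
            = ∑ b ∈ range p, (-1 : ℚ_[p]) ^ b * (f (a : ℤ_[p]) * (-q) ^ a) := by
          rw [← Finset.sum_mul, neg_one_geom_sum, if_neg (Nat.not_even_iff_odd.mpr hpo), one_mul]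
        rw [hone, ← Finset.sum_sub_distrib]
        apply Finset.sum_congr rfl
        intro b _
        have hpow : ((-q) ^ (b * p ^ N + a) : ℚ_[p])
            = (-1 : ℚ_[p]) ^ b * (q ^ (p ^ N)) ^ b * (-q) ^ a := by
          rw [pow_add, mul_comm b (p ^ N), pow_mul, Odd.neg_pow hpo.pow, neg_pow]
        rw [hpow]
        ring
      rw [hinner, norm_mul, norm_pow, hnegq, one_pow, mul_one]
      apply my_norm_sum_le (by positivity)
      intro b _
      rw [norm_mul, norm_pow, norm_neg, norm_one, one_pow, one_mul]
      have hrw : ((q ^ (p ^ N)) ^ b * f ((b * p ^ N + a : ℕ) : ℤ_[p]) - f (a : ℤ_[p]) : ℚ_[p])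
          = ((q ^ (p ^ N)) ^ b - 1) * f ((b * p ^ N + a : ℕ) : ℤ_[p])
            + (f ((b * p ^ N + a : ℕ) : ℤ_[p]) - f (a : ℤ_[p])) := by ring
      rw [hrw]
      refine le_trans (Padic.nonarchimedean _ _) (max_le ?_ ?_)
      · rw [norm_mul]
        have hqpn : ‖q ^ (p ^ N)‖ ≤ 1 := by rw [norm_pow, hq1, one_pow]
        calc ‖(q ^ (p ^ N)) ^ b - 1‖ * ‖f ((b * p ^ N + a : ℕ) : ℤ_[p])‖
            ≤ ‖q ^ (p ^ N) - 1‖ * M' :=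
              mul_le_mul (my_pow_sub_one_le hqpn b) (hM' _) (norm_nonneg _)
                (norm_nonneg _)
          _ ≤ ε / 2 := le_of_lt h1
      · have hdist : dist ((b * p ^ N + a : ℕ) : ℤ_[p]) ((a : ℕ) : ℤ_[p]) < δ := by
          rw [dist_eq_norm]
          have hcast : ((b * p ^ N + a : ℕ) : ℤ_[p]) - ((a : ℕ) : ℤ_[p])
              = ((b : ℕ) : ℤ_[p]) * ((p : ℤ_[p]) ^ N) := by push_cast; ring
          rw [hcast]
          calc ‖((b : ℕ) : ℤ_[p]) * ((p : ℤ_[p]) ^ N)‖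
              ≤ 1 * ‖(p : ℤ_[p]) ^ N‖ := by
                rw [norm_mul]
                exact mul_le_mul_of_nonneg_right (PadicInt.norm_le_one _) (norm_nonneg _)
            _ = (p:ℝ)⁻¹ ^ N := by rw [one_mul, norm_pow, PadicInt.norm_p]
            _ < δ := h2
        have := hδ hdist
        rw [dist_eq_norm] at this
        exact le_of_lt this
    exact lt_of_le_of_lt hband (by linarith)
  -- consecutive differences of c N * S N tend to zero
  have hd : Tendsto (fun N => c (N + 1) * S (N + 1) - c N * S N) atTop (nhds 0) := by
    have heq : (fun N => c (N + 1) * S (N + 1) - c N * S N)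
        = fun N => c (N + 1) * (S (N + 1) - S N) + (c (N + 1) - c N) * S N := by
      funext N; ring
    rw [heq]
    have h1 : Tendsto (fun N => c (N + 1) * (S (N + 1) - S N)) atTop (nhds 0) := by
      refine squeeze_zero_norm (a := fun N => ‖S (N + 1) - S N‖) (fun N => ?_) ?_
      · rw [norm_mul, hc1 (N + 1), one_mul]
      · simpa using hDS.norm
    have h2 : Tendsto (fun N => (c (N + 1) - c N) * S N) atTop (nhds 0) := by
      refine squeeze_zero_norm (a := fun N => ‖c (N + 1) - c N‖ * M') (fun N => ?_) ?_
      · rw [norm_mul]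
        exact mul_le_mul_of_nonneg_left (hSle N) (norm_nonneg _)
      · have hc0 : Tendsto (fun N => c (N + 1) - c N) atTop (nhds 0) := by
          have := (htc.comp (tendsto_add_atTop_nat 1)).sub htc
          simpa using this
        simpa using hc0.norm.mul_const M'
    simpa using h1.add h2
  -- summability and telescoping
  have hcof : Tendsto (fun N => c (N + 1) * S (N + 1) - c N * S N) cofinite (nhds 0) := by
    rwa [Nat.cofinite_eq_atTop]
  have hsum : Summable (fun N => c (N + 1) * S (N + 1) - c N * S N) :=
    NonarchimedeanAddGroup.summable_of_tendsto_cofinite_zero hcof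
  obtain ⟨L, hL⟩ := hsum
  have hpart := hL.tendsto_sum_nat
  have htel : (fun N => ∑ k ∈ range N, (c (k + 1) * S (k + 1) - c k * S k))
      = fun N => c N * S N - c 0 * S 0 := by
    funext N
    exact Finset.sum_range_sub (fun k => c k * S k) N
  rw [htel] at hpart
  refine ⟨L + c 0 * S 0, ?_⟩
  have := hpart.add_const (c 0 * S 0)
  simpa using this

/-- For an odd prime `p`, `q ∈ ℚ_p` with `|1-q|_p < 1`, and continuous `f : ℤ_p → ℚ_p`,
the fermionic `p`-adic `q`-integral
`I₋q(f) = lim_N (1/[p^N]₋q) ∑_{x=0}^{p^N-1} f(x)(-q)^x` exists (here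
`1/[p^N]₋q = (1+q)/(1-(-q)^{p^N})`), and `q·I₋q(f₁) + I₋q(f) = [2]_q f(0)`
where `f₁(x) = f(x+1)` and `[2]_q = 1 + q`. -/
theorem fermionic_q_integral_exists_and_shift (p : ℕ) [Fact (Nat.Prime p)] (hp : Odd p)
    (q : ℚ_[p]) (hq : ‖1 - q‖ < 1)
    (f : ℤ_[p] → ℚ_[p]) (hf : Continuous f) :
    ∃ I I₁ : ℚ_[p],
      Tendsto (fun N : ℕ =>
          ((1 + q) / (1 - (-q) ^ (p ^ N))) * ∑ x ∈ range (p ^ N), f (x : ℤ_[p]) * (-q) ^ x)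
        atTop (nhds I) ∧
      Tendsto (fun N : ℕ =>
          ((1 + q) / (1 - (-q) ^ (p ^ N))) * ∑ x ∈ range (p ^ N), f ((x : ℤ_[p]) + 1) * (-q) ^ x)
        atTop (nhds I₁) ∧
      q * I₁ + I = (1 + q) * f 0 := by
  obtain ⟨I, hI⟩ := my_conv hp q hq f hf
  obtain ⟨I₁, hI₁⟩ := my_conv hp q hq (fun y => f (y + 1))
    (hf.comp (continuous_id.add continuous_const))
  refine ⟨I, I₁, hI, hI₁, ?_⟩
  -- limits notation
  set c : ℕ → ℚ_[p] := fun N => (1 + q) / (1 - (-q) ^ (p ^ N)) with hcdef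
  set S : ℕ → ℚ_[p] := fun N => ∑ x ∈ range (p ^ N), f (x : ℤ_[p]) * (-q) ^ x with hSdef
  set S₁ : ℕ → ℚ_[p] := fun N => ∑ x ∈ range (p ^ N), f ((x : ℤ_[p]) + 1) * (-q) ^ x with hS₁def
  have h1 : Tendsto (fun N => q * (c N * S₁ N) + c N * S N) atTop (nhds (q * I₁ + I)) :=
    (hI₁.const_mul q).add hI
  -- algebraic identity
  have h2 : (fun N => q * (c N * S₁ N) + c N * S N)
      = fun N => c N * (f 0 + f ((p ^ N : ℕ) : ℤ_[p]) * q ^ (p ^ N)) := by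
    funext N
    have hkey : q * S₁ N + S N = f 0 + f ((p ^ N : ℕ) : ℤ_[p]) * q ^ (p ^ N) := by
      have hstep : S N + f ((p ^ N : ℕ) : ℤ_[p]) * (-q) ^ (p ^ N) = S₁ N * (-q) + f 0 := by
        have e1 : S N + f ((p ^ N : ℕ) : ℤ_[p]) * (-q) ^ (p ^ N)
            = ∑ x ∈ range (p ^ N + 1), f (x : ℤ_[p]) * (-q) ^ x := by
          rw [Finset.sum_range_succ]
        have e2 : ∑ x ∈ range (p ^ N + 1), f (x : ℤ_[p]) * (-q) ^ x
            = (∑ x ∈ range (p ^ N), f (((x + 1 : ℕ)) : ℤ_[p]) * (-q) ^ (x + 1)) + f 0 := by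
          rw [Finset.sum_range_succ']
          norm_num
        have e3 : (∑ x ∈ range (p ^ N), f (((x + 1 : ℕ)) : ℤ_[p]) * (-q) ^ (x + 1))
            = S₁ N * (-q) := by
          rw [hS₁def, Finset.sum_mul]
          apply Finset.sum_congr rfl
          intro x _
          push_cast
          ring
        rw [e1, e2, e3]
      have hneg : ((-q) ^ (p ^ N) : ℚ_[p]) = -(q ^ (p ^ N)) := Odd.neg_pow hp.pow q
      have := hstep
      rw [hneg] at this
      linear_combination this
    calc q * (c N * S₁ N) + c N * S N = c N * (q * S₁ N + S N) := by ring
      _ = c N * (f 0 + f ((p ^ N : ℕ) : ℤ_[p]) * q ^ (p ^ N)) := by rw [hkey]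
  rw [h2] at h1
  -- limit of RHS
  have hcast : Tendsto (fun N : ℕ => ((p ^ N : ℕ) : ℤ_[p])) atTop (nhds 0) := by
    rw [tendsto_zero_iff_norm_tendsto_zero]
    have heq : (fun N : ℕ => ‖((p ^ N : ℕ) : ℤ_[p])‖) = fun N : ℕ => (p:ℝ)⁻¹ ^ N := by
      funext N
      push_cast
      rw [norm_pow, PadicInt.norm_p]
    rw [heq]
    have hp1 : (1 : ℝ) < p := by exact_mod_cast (Fact.out : Nat.Prime p).one_lt
    exact tendsto_pow_atTop_nhds_zero_of_lt_one (by positivity) (by rw [inv_lt_one_iff₀]; right; exact hp1)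
  have hfp : Tendsto (fun N : ℕ => f ((p ^ N : ℕ) : ℤ_[p])) atTop (nhds (f 0)) :=
    (hf.tendsto 0).comp hcast
  have hqp : Tendsto (fun N : ℕ => q ^ (p ^ N)) atTop (nhds 1) := my_tendsto_qpow hq
  have h2norm : ‖(1 + 1 : ℚ_[p])‖ = 1 := my_norm_one_add hp (by simp)
  have h2ne : (1 + 1 : ℚ_[p]) ≠ 0 := by
    intro h; rw [h] at h2norm; simp at h2norm
  have htc : Tendsto c atTop (nhds ((1 + q) / (1 + 1))) := by
    have hfun : c = fun N => (1 + q) / (1 + q ^ (p ^ N)) := by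
      funext N
      show (1 + q) / (1 - (-q) ^ p ^ N) = (1 + q) / (1 + q ^ p ^ N)
      rw [Odd.neg_pow hp.pow, sub_neg_eq_add]
    rw [hfun]
    exact tendsto_const_nhds.div (tendsto_const_nhds.add hqp) h2ne
  have h3 : Tendsto (fun N => c N * (f 0 + f ((p ^ N : ℕ) : ℤ_[p]) * q ^ (p ^ N))) atTop
      (nhds ((1 + q) / (1 + 1) * (f 0 + f 0 * 1))) :=
    htc.mul (tendsto_const_nhds.add (hfp.mul hqp))
  have hval : ((1 + q) / (1 + 1) : ℚ_[p]) * (f 0 + f 0 * 1) = (1 + q) * f 0 := by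
    field_simp
  rw [hval] at h3
  exact tendsto_nhds_unique h1 h3
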